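/- For all integers m ≥ ks, the numbers a(m, s) satisfy the recurrence ∑_{i=0}^{s} (−1)^i · C(s, i) · a(m−i, s) = n^s, where C(s, i) denotes the binomial coefficient. (When n < k no horizontal placement exists, so all k-mers are vertical.) -/

import Mathlib

/-- The set of sites occupied by a horizontal `k`-mer starting at column `c`, row `r`. -/
def horizKmer (k c r : ℕ) : Finset (ℕ × ℕ) :=
  (Finset.range k).image fun i => (c + i, r)

/-- The set of sites occupied by a vertical `k`-mer at column `c` starting at row `r`. -/
def vertKmer (k c r : ℕ) : Finset (ℕ × ℕ) :=
  (Finset.range k).image fun i => (c, r + i)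

/-- A `k`-mer placement on the `n × m` lattice with free boundary conditions,
identified with its set of occupied sites `(c, r)`, `1 ≤ c ≤ n`, `1 ≤ r ≤ m`. -/
def IsFreePlacement (k n m : ℕ) (p : Finset (ℕ × ℕ)) : Prop :=
  (∃ c r, 1 ≤ c ∧ c + k ≤ n + 1 ∧ 1 ≤ r ∧ r ≤ m ∧ p = horizKmer k c r) ∨
  (∃ c r, 1 ≤ c ∧ c ≤ n ∧ 1 ≤ r ∧ r + k ≤ m + 1 ∧ p = vertKmer k c r)

/-- A configuration of `s` `k`-mers on the `n × m` lattice with free boundary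
conditions: a set of `s` placements whose occupied site sets are pairwise disjoint. -/
def IsFreeConfig (k n m s : ℕ) (C : Finset (Finset (ℕ × ℕ))) : Prop :=
  C.card = s ∧ (∀ p ∈ C, IsFreePlacement k n m p) ∧
    (C : Set (Finset (ℕ × ℕ))).Pairwise fun p q => Disjoint p q

/-- `a(m, s)`: the number of configurations of `s` `k`-mers on the `n × m`
lattice with free boundary conditions. -/
noncomputable def freeCount (k n m s : ℕ) : ℕ :=
  {C | IsFreeConfig k n m s C}.ncard


open Finset fwdDiff

lemma fwdDiff_iter_zero_fun (s : ℕ) : (fwdDiff 1)^[s] (fun _ : ℕ => (0:ℤ)) = fun _ => 0 := by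
  induction s with
  | zero => simp
  | succ s IH => rw [Function.iterate_succ_apply, show fwdDiff 1 (fun _ : ℕ => (0:ℤ)) = fun _ => 0 from fwdDiff_const 1 0, IH]

lemma fwdDiff_key (s : ℕ) : ∀ (j s' b : ℕ) (G : ℕ → ℤ) (g : ℤ), j + s' = s →
    (fwdDiff 1)^[s'] G = (fun _ => g) →
    (fwdDiff 1)^[s] (fun x => ((x + b).choose j : ℤ) * G x) = fun _ => (s.choose j : ℤ) * g := by
  induction s with
  | zero =>
    rintro j s' b G g hjs hG
    obtain ⟨rfl, rfl⟩ : j = 0 ∧ s' = 0 := by omega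
    simp only [Function.iterate_zero, id_eq] at hG ⊢
    rw [hG]; funext x; simp
  | succ s IH =>
    rintro j s' b G g hjs hG
    match j with
    | 0 =>
      have hs' : s' = s + 1 := by omega
      subst hs'
      simpa using hG
    | (j' + 1) =>
      rw [Function.iterate_succ_apply]
      have hsplit : fwdDiff 1 (fun x => ((x + b).choose (j'+1) : ℤ) * G x)
          = (fun x => ((x + (b+1)).choose (j'+1) : ℤ) * (fwdDiff 1 G x))
            + (fun x => ((x + b).choose j' : ℤ) * G x) := by
        funext x
        simp only [fwdDiff, Pi.add_apply]
        have h1 : x + 1 + b = x + b + 1 := by ring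
        have h2 : x + (b + 1) = x + b + 1 := by ring
        rw [h1, h2, Nat.choose_succ_succ' (x+b) j']
        push_cast
        ring
      rw [hsplit, fwdDiff_iter_add]
      match s', hG with
      | 0, hG =>
        have hG' : G = fun _ => g := by simpa using hG
        have hz : (fun x => ((x + (b+1)).choose (j'+1) : ℤ) * (fwdDiff 1 G x)) = fun _ => (0:ℤ) := by
          funext x
          rw [hG', fwdDiff_const]
          simp
        rw [hz, fwdDiff_iter_zero_fun, IH j' 0 b G g (by omega) hG]
        funext x
        simp only [Pi.add_apply]
        rw [show j' = s from by omega, Nat.choose_self, Nat.choose_self]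
        simp
      | (s''+1), hG =>
        have hG2 : (fwdDiff 1)^[s''] (fwdDiff 1 G) = fun _ => g := by
          rw [← Function.iterate_succ_apply]; exact hG
        rw [IH (j'+1) s'' (b+1) (fwdDiff 1 G) g (by omega) hG2,
            IH j' (s''+1) b G g (by omega) hG]
        funext x
        simp only [Pi.add_apply]
        rw [Nat.choose_succ_succ' s j']
        push_cast
        ring

def gapFree (k : ℕ) (R : Finset ℕ) : Prop :=
  ∀ r ∈ R, ∀ r' ∈ R, r ≠ r' → (r + k ≤ r' ∨ r' + k ≤ r)

instance (k : ℕ) : DecidablePred (gapFree k) := fun R => by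
  unfold gapFree; infer_instance

def gapSets (k L j : ℕ) : Finset (Finset ℕ) :=
  ((Finset.Icc 1 L).powersetCard j).filter (gapFree k)

lemma gapFree_subset {k : ℕ} {R R' : Finset ℕ} (h : R' ⊆ R) (hR : gapFree k R) :
    gapFree k R' := fun r hr r' hr' hne => hR r (h hr) r' (h hr') hne

lemma gapSets_card (k : ℕ) (hk : 2 ≤ k) : ∀ L j, (gapSets k L j).card = (L - (k-1)*(j-1)).choose j := by
  intro L
  induction L using Nat.strong_induction_on with
  | _ L IH =>
    intro j
    match j with
    | 0 =>
      simp only [gapSets, Finset.powersetCard_zero, Nat.choose_zero_right]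
      rw [Finset.filter_singleton]
      simp [gapFree]
    | (j + 1) =>
      match L with
      | 0 =>
        have h1 : (gapSets k 0 (j+1)).card ≤ ((Finset.Icc 1 0).powersetCard (j+1)).card :=
          Finset.card_le_card (Finset.filter_subset _ _)
        rw [Finset.card_powersetCard] at h1
        have h2 : (Finset.Icc 1 0).card = 0 := by simp
        rw [h2, Nat.choose_eq_zero_of_lt (by omega)] at h1
        rw [Nat.le_zero.mp h1, Nat.zero_sub, Nat.choose_eq_zero_of_lt (by omega)]
      | (L + 1) =>
        -- split by whether L+1 is in the set
        have hsplit := Finset.card_filter_add_card_filter_not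
          (s := gapSets k (L+1) (j+1)) (p := fun R => L + 1 ∈ R)
        -- the sets not containing L+1
        have hnot : (gapSets k (L+1) (j+1)).filter (fun R => ¬ (L+1 ∈ R)) = gapSets k L (j+1) := by
          ext R
          simp only [gapSets, Finset.mem_filter, Finset.mem_powersetCard]
          constructor
          · rintro ⟨⟨⟨hsub, hcard⟩, hgap⟩, hnm⟩
            refine ⟨⟨fun r hr => ?_, hcard⟩, hgap⟩
            have := hsub hr
            simp only [Finset.mem_Icc] at this ⊢
            have : r ≠ L + 1 := fun h => hnm (h ▸ hr)
            omega
          · rintro ⟨⟨hsub, hcard⟩, hgap⟩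
            have hn : L + 1 ∉ R := fun h => by
              have := hsub h; simp only [Finset.mem_Icc] at this; omega
            exact ⟨⟨⟨fun r hr => by
              have := hsub hr; simp only [Finset.mem_Icc] at this ⊢; omega, hcard⟩, hgap⟩, hn⟩
        -- the sets containing L+1 biject with gapSets k (L+1-k) j
        have hyes : ((gapSets k (L+1) (j+1)).filter (fun R => L+1 ∈ R)).card
            = (gapSets k (L+1-k) j).card := by
          apply Finset.card_nbij' (fun R => R.erase (L+1)) (fun R => insert (L+1) R)
          · rintro R hR
            simp only [Finset.mem_coe, gapSets, Finset.mem_filter, Finset.mem_powersetCard] at hR ⊢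
            obtain ⟨⟨⟨hsub, hcard⟩, hgap⟩, hmem⟩ := hR
            refine ⟨⟨fun r hr => ?_, ?_⟩, gapFree_subset (Finset.erase_subset _ _) hgap⟩
            · rw [Finset.mem_erase] at hr
              obtain ⟨hne, hrR⟩ := hr
              have h1 := hsub hrR
              simp only [Finset.mem_Icc] at h1 ⊢
              rcases hgap r hrR (L+1) hmem hne with h | h
              · omega
              · omega
            · rw [Finset.card_erase_of_mem hmem, hcard]
              omega
          · rintro R hR
            simp only [Finset.mem_coe, gapSets, Finset.mem_filter, Finset.mem_powersetCard] at hR ⊢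
            obtain ⟨⟨hsub, hcard⟩, hgap⟩ := hR
            have hnm : L + 1 ∉ R := fun h => by
              have := hsub h; simp only [Finset.mem_Icc] at this; omega
            refine ⟨⟨⟨fun r hr => ?_, ?_⟩, ?_⟩, Finset.mem_insert_self _ _⟩
            · rw [Finset.mem_insert] at hr
              rcases hr with rfl | hr
              · simp only [Finset.mem_Icc]; omega
              · have := hsub hr; simp only [Finset.mem_Icc] at this ⊢; omega
            · rw [Finset.card_insert_of_notMem hnm, hcard]
            · intro r hr r' hr' hne
              rw [Finset.mem_insert] at hr hr'
              rcases hr with rfl | hr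
              · rcases hr' with rfl | hr'
                · exact absurd rfl hne
                · have := hsub hr'; simp only [Finset.mem_Icc] at this; right; omega
              · rcases hr' with rfl | hr'
                · have := hsub hr; simp only [Finset.mem_Icc] at this; left; omega
                · exact hgap r hr r' hr' hne
          · rintro R hR
            simp only [Finset.mem_coe, Finset.mem_filter] at hR
            exact Finset.insert_erase hR.2
          · rintro R hR
            simp only [Finset.mem_coe, gapSets, Finset.mem_filter, Finset.mem_powersetCard] at hR
            apply Finset.erase_insert
            intro h
            have := hR.1.1 h
            simp only [Finset.mem_Icc] at this
            omega
        rw [hyes, hnot] at hsplit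
        rw [← hsplit, IH L (by omega) (j+1), IH (L+1-k) (by omega) j]
        -- arithmetic
        match j with
        | 0 => simp [Nat.choose_one_right]; omega
        | (j + 1) =>
          have hmul : (k-1)*(j+1+1-1) = (k-1)*(j+1-1) + (k-1) := by
            simp only [Nat.add_sub_cancel]
            ring
          rcases le_or_gt ((k-1)*(j+1)) L with hle | hlt
          · have e1 : L + 1 - (k-1)*(j+1+1-1) = (L - (k-1)*(j+1)) + 1 := by
              simp only [Nat.add_sub_cancel]; omega
            have e2 : L + 1 - k - (k-1)*(j+1-1) = L - (k-1)*(j+1) := by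
              simp only [Nat.add_sub_cancel]
              have : (k-1)*(j+1) = (k-1)*j + (k-1) := by ring
              omega
            rw [e1, e2, Nat.add_sub_cancel, Nat.choose_succ_succ' (L - (k-1)*(j+1)) (j+1)]
          · have e1 : L + 1 - (k-1)*(j+1+1-1) = 0 := by
              simp only [Nat.add_sub_cancel]
              have : (k-1)*(j+2) = (k-1)*(j+1) + (k-1) := by ring
              omega
            have e2 : L - (k-1)*(j+1+1-1) = 0 := by
              simp only [Nat.add_sub_cancel]
              have : (k-1)*(j+2) = (k-1)*(j+1) + (k-1) := by ring
              omega
            have e3 : L + 1 - k - (k-1)*(j+1-1) = 0 := by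
              simp only [Nat.add_sub_cancel]
              have : (k-1)*(j+1) = (k-1)*j + (k-1) := by ring
              omega
            rw [e1, e2, e3]
            simp [Nat.choose_eq_zero_of_lt]

def colGood (k : ℕ) (A : Finset (ℕ × ℕ)) : Prop :=
  ∀ p ∈ A, ∀ q ∈ A, p ≠ q → p.1 ≠ q.1 ∨ p.2 + k ≤ q.2 ∨ q.2 + k ≤ p.2

instance (k : ℕ) : DecidablePred (colGood k) := fun A => by
  unfold colGood; infer_instance

lemma colGood_subset {k : ℕ} {A A' : Finset (ℕ × ℕ)} (h : A' ⊆ A) (hA : colGood k A) :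
    colGood k A' := fun p hp q hq hne => hA p (h hp) q (h hq) hne

def configs (k : ℕ) (cols : Finset ℕ) (L s : ℕ) : Finset (Finset (ℕ × ℕ)) :=
  ((cols ×ˢ Finset.Icc 1 L).powersetCard s).filter (colGood k)

lemma configs_cons_card (k i : ℕ) (cols : Finset ℕ) (hi : i ∉ cols) (L s : ℕ) :
    (configs k (Finset.cons i cols hi) L s).card
      = ∑ p ∈ Finset.HasAntidiagonal.antidiagonal s, (gapSets k L p.1).card * (configs k cols L p.2).card := by
  have hdisj : (↑(Finset.HasAntidiagonal.antidiagonal s) : Set (ℕ × ℕ)).PairwiseDisjoint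
      (fun p => (gapSets k L p.1) ×ˢ (configs k cols L p.2)) := by
    intro p hp q hq hne
    simp only [Function.onFun]
    rw [Finset.disjoint_left]
    rintro ⟨R, A⟩ hxp hxq
    simp only [Finset.mem_product, gapSets, configs, Finset.mem_filter,
      Finset.mem_powersetCard] at hxp hxq
    apply hne
    have h1 : R.card = p.1 := hxp.1.1.2
    have h2 : A.card = p.2 := hxp.2.1.2
    have h3 : R.card = q.1 := hxq.1.1.2
    have h4 : A.card = q.2 := hxq.2.1.2
    ext <;> omega
  rw [show ∑ p ∈ Finset.HasAntidiagonal.antidiagonal s, (gapSets k L p.1).card * (configs k cols L p.2).card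
      = ((Finset.HasAntidiagonal.antidiagonal s).disjiUnion _ hdisj).card by
    rw [Finset.card_disjiUnion]
    exact Finset.sum_congr rfl fun p _ => (Finset.card_product _ _).symm]
  apply Finset.card_nbij'
    (i := fun A => ((A.filter (fun q => q.1 = i)).image Prod.snd, A.filter (fun q => ¬ q.1 = i)))
    (j := fun P => (P.1.image (fun r => (i, r))) ∪ P.2)
  · -- forward membership
    intro A hA
    simp only [Finset.mem_coe, configs, Finset.mem_filter, Finset.mem_powersetCard] at hA
    obtain ⟨⟨hsub, hcard⟩, hgood⟩ := hA
    have hinj : Set.InjOn Prod.snd (↑(A.filter (fun q => q.1 = i)) : Set (ℕ × ℕ)) := by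
      intro q hq q' hq' hsnd
      simp only [Finset.coe_filter, Set.mem_setOf_eq] at hq hq'
      exact Prod.ext (hq.2.trans hq'.2.symm) hsnd
    rw [Finset.mem_coe, Finset.mem_disjiUnion]
    refine ⟨((A.filter (fun q => q.1 = i)).card, (A.filter (fun q => ¬ q.1 = i)).card),
      ?_, ?_⟩
    · rw [Finset.HasAntidiagonal.mem_antidiagonal]
      rw [← hcard]
      exact Finset.card_filter_add_card_filter_not _
    · rw [Finset.mem_product]
      constructor
      · simp only [gapSets, Finset.mem_filter, Finset.mem_powersetCard]
        refine ⟨⟨?_, Finset.card_image_of_injOn hinj⟩, ?_⟩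
        · intro r hr
          simp only [Finset.mem_image, Finset.mem_filter] at hr
          obtain ⟨q, ⟨hqA, _⟩, rfl⟩ := hr
          have := hsub hqA
          rw [Finset.mem_product] at this
          exact this.2
        · intro r hr r' hr' hne
          simp only [Finset.mem_image, Finset.mem_filter] at hr hr'
          obtain ⟨q, ⟨hqA, hq1⟩, rfl⟩ := hr
          obtain ⟨q', ⟨hq'A, hq'1⟩, rfl⟩ := hr'
          have hqq' : q ≠ q' := fun h => hne (by rw [h])
          rcases hgood q hqA q' hq'A hqq' with h | h
          · exact absurd (hq1.trans hq'1.symm) h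
          · exact h
      · simp only [configs, Finset.mem_filter, Finset.mem_powersetCard]
        refine ⟨⟨?_, trivial⟩, colGood_subset (Finset.filter_subset _ _) hgood⟩
        intro q hq
        simp only [Finset.mem_filter] at hq
        have := hsub hq.1
        rw [Finset.mem_product] at this ⊢
        rw [Finset.mem_cons] at this
        exact ⟨this.1.resolve_left hq.2, this.2⟩
  · -- backward membership
    rintro ⟨R, A⟩ hP
    rw [Finset.mem_coe, Finset.mem_disjiUnion] at hP
    obtain ⟨p, hpmem, hPmem⟩ := hP
    rw [Finset.HasAntidiagonal.mem_antidiagonal] at hpmem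
    rw [Finset.mem_product] at hPmem
    obtain ⟨hR, hA⟩ := hPmem
    simp only [gapSets, configs, Finset.mem_filter, Finset.mem_powersetCard] at hR hA
    obtain ⟨⟨hRsub, hRcard⟩, hRgap⟩ := hR
    obtain ⟨⟨hAsub, hAcard⟩, hAgood⟩ := hA
    have hfst : ∀ q ∈ A, q.1 ∈ cols := fun q hq => by
      have := hAsub hq; rw [Finset.mem_product] at this; exact this.1
    have hdisjU : Disjoint (R.image (fun r => (i, r))) A := by
      rw [Finset.disjoint_left]
      intro q hq hqA
      simp only [Finset.mem_image] at hq
      obtain ⟨r, _, rfl⟩ := hq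
      exact hi (hfst _ hqA)
    simp only [Finset.mem_coe, configs, Finset.mem_filter, Finset.mem_powersetCard]
    refine ⟨⟨?_, ?_⟩, ?_⟩
    · intro q hq
      rw [Finset.mem_union] at hq
      rw [Finset.mem_product]
      rcases hq with hq | hq
      · simp only [Finset.mem_image] at hq
        obtain ⟨r, hr, rfl⟩ := hq
        exact ⟨Finset.mem_cons_self _ _, hRsub hr⟩
      · have := hAsub hq
        rw [Finset.mem_product] at this
        exact ⟨Finset.mem_cons.mpr (Or.inr this.1), this.2⟩
    · rw [Finset.card_union_of_disjoint hdisjU,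
        Finset.card_image_of_injective _ (fun a b h => by simpa using h), hRcard, hAcard, hpmem]
    · intro q hq q' hq' hne
      rw [Finset.mem_union] at hq hq'
      rcases hq with hq | hq <;> rcases hq' with hq' | hq'
      · simp only [Finset.mem_image] at hq hq'
        obtain ⟨r, hr, rfl⟩ := hq
        obtain ⟨r', hr', rfl⟩ := hq'
        have : r ≠ r' := fun h => hne (by rw [h])
        exact Or.inr (hRgap r hr r' hr' this)
      · refine Or.inl ?_
        simp only [Finset.mem_image] at hq
        obtain ⟨r, _, rfl⟩ := hq
        intro h
        apply hi
        rw [show i = q'.1 from h]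
        exact hfst q' hq'
      · refine Or.inl ?_
        simp only [Finset.mem_image] at hq'
        obtain ⟨r, _, rfl⟩ := hq'
        intro h
        apply hi
        rw [show i = q.1 from h.symm]
        exact hfst q hq
      · exact hAgood q hq q' hq' hne
  · -- left inverse
    intro A hA
    have h1 : ((A.filter (fun q => q.1 = i)).image Prod.snd).image (fun r => (i, r))
        = A.filter (fun q => q.1 = i) := by
      rw [Finset.image_image]
      ext q
      simp only [Finset.mem_image, Finset.mem_filter, Function.comp]
      constructor
      · rintro ⟨q', ⟨hq', hq'1⟩, rfl⟩
        refine ⟨?_, rfl⟩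
        rwa [show ((i, q'.2) : ℕ × ℕ) = q' from Prod.ext hq'1.symm rfl]
      · intro ⟨hqA, hq1⟩
        exact ⟨q, ⟨hqA, hq1⟩, Prod.ext hq1.symm rfl⟩
    beta_reduce
    rw [h1, Finset.filter_union_filter_not_eq]
  · -- right inverse
    rintro ⟨R, A⟩ hP
    rw [Finset.mem_coe, Finset.mem_disjiUnion] at hP
    obtain ⟨p, hpmem, hPmem⟩ := hP
    rw [Finset.mem_product] at hPmem
    obtain ⟨hR, hA⟩ := hPmem
    simp only [gapSets, configs, Finset.mem_filter, Finset.mem_powersetCard] at hR hA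
    have hfst : ∀ q ∈ A, q.1 ∈ cols := fun q hq => by
      have := hA.1.1 hq; rw [Finset.mem_product] at this; exact this.1
    have e1 : (R.image (fun r => (i, r)) ∪ A).filter (fun q => q.1 = i)
        = R.image (fun r => (i, r)) := by
      ext q
      simp only [Finset.mem_filter, Finset.mem_union, Finset.mem_image]
      constructor
      · rintro ⟨hq | hqA, hq1⟩
        · exact hq
        · exact absurd (hq1 ▸ hfst q hqA) hi
      · rintro ⟨r, hr, rfl⟩
        exact ⟨Or.inl ⟨r, hr, rfl⟩, rfl⟩
    have e2 : (R.image (fun r => (i, r)) ∪ A).filter (fun q => ¬ q.1 = i) = A := by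
      ext q
      simp only [Finset.mem_filter, Finset.mem_union, Finset.mem_image]
      constructor
      · rintro ⟨hq | hqA, hq1⟩
        · obtain ⟨r, _, rfl⟩ := hq
          exact absurd rfl hq1
        · exact hqA
      · intro hqA
        exact ⟨Or.inr hqA, fun h => hi (h ▸ hfst q hqA)⟩
    simp only [Prod.mk.injEq]
    refine ⟨?_, e2⟩
    rw [e1, Finset.image_image]
    have : (Prod.snd ∘ fun r : ℕ => (i, r)) = id := rfl
    rw [this, Finset.image_id]

lemma configs_empty_card (k L s : ℕ) :
    (configs k ∅ L s).card = if s = 0 then 1 else 0 := by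
  unfold configs
  rw [Finset.empty_product]
  match s with
  | 0 =>
    rw [Finset.powersetCard_zero, Finset.filter_singleton]
    simp [colGood]
  | (s+1) =>
    rw [if_neg (Nat.succ_ne_zero s)]
    have : (Finset.powersetCard (s+1) (∅ : Finset (ℕ × ℕ))) = ∅ := by
      rw [Finset.powersetCard_eq_empty]
      simp
    rw [this, Finset.filter_empty, Finset.card_empty]

lemma configs_fwdDiff (k : ℕ) (hk : 2 ≤ k) (cols : Finset ℕ) :
    ∀ (s L₀ : ℕ), (k-1)*(s-1) ≤ L₀ →
    (fwdDiff 1)^[s] (fun t => ((configs k cols (t + L₀) s).card : ℤ))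
      = fun _ => (cols.card : ℤ)^s := by
  induction cols using Finset.cons_induction with
  | empty =>
    intro s L₀ _
    match s with
    | 0 =>
      funext t
      simp [configs_empty_card]
    | (s+1) =>
      have h0 : (fun t : ℕ => ((configs k ∅ (t + L₀) (s+1)).card : ℤ)) = fun _ => (0:ℤ) := by
        funext t
        rw [configs_empty_card]
        simp
      rw [h0, fwdDiff_iter_zero_fun]
      simp
  | cons i cols hi IH =>
    intro s L₀ hL
    have hfun : (fun t => ((configs k (Finset.cons i cols hi) (t + L₀) s).card : ℤ))
        = ∑ p ∈ Finset.HasAntidiagonal.antidiagonal s,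
            (fun t => ((t + (L₀ - (k-1)*(p.1-1))).choose p.1 : ℤ)
              * ((configs k cols (t + L₀) p.2).card : ℤ)) := by
      funext t
      rw [Finset.sum_apply]
      rw [configs_cons_card k i cols hi (t + L₀) s]
      push_cast
      refine Finset.sum_congr rfl fun p hp => ?_
      rw [Finset.HasAntidiagonal.mem_antidiagonal] at hp
      rw [gapSets_card k hk (t + L₀) p.1]
      have h1 : (k-1)*(p.1-1) ≤ (k-1)*(s-1) := Nat.mul_le_mul_left _ (by omega)
      have harg : t + L₀ - (k-1)*(p.1-1) = t + (L₀ - (k-1)*(p.1-1)) := by omega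
      rw [harg]
    rw [hfun, fwdDiff_iter_finset_sum]
    have hterm : ∀ p ∈ Finset.HasAntidiagonal.antidiagonal s,
        (fwdDiff 1)^[s] (fun t => ((t + (L₀ - (k-1)*(p.1-1))).choose p.1 : ℤ)
          * ((configs k cols (t + L₀) p.2).card : ℤ))
        = fun _ => (s.choose p.1 : ℤ) * (cols.card : ℤ)^p.2 := by
      intro p hp
      rw [Finset.HasAntidiagonal.mem_antidiagonal] at hp
      apply fwdDiff_key s p.1 p.2 _ _ _ (by omega)
      apply IH p.2 L₀
      calc (k-1)*(p.2-1) ≤ (k-1)*(s-1) := Nat.mul_le_mul_left _ (by omega)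
        _ ≤ L₀ := hL
    rw [Finset.sum_congr rfl hterm]
    funext t
    rw [Finset.sum_apply, Finset.card_cons, Finset.Nat.sum_antidiagonal_eq_sum_range_succ_mk]
    push_cast
    rw [show ((cols.card : ℤ) + 1) = 1 + (cols.card : ℤ) by ring, add_pow]
    refine Finset.sum_congr rfl fun j hj => ?_
    simp only [one_pow]
    ring

lemma mem_vertKmer {k c r : ℕ} {q : ℕ × ℕ} :
    q ∈ vertKmer k c r ↔ q.1 = c ∧ ∃ i < k, q.2 = r + i := by
  simp only [vertKmer, Finset.mem_image, Finset.mem_range]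
  constructor
  · rintro ⟨i, hi, rfl⟩
    exact ⟨rfl, i, hi, rfl⟩
  · rintro ⟨h1, i, hi, h2⟩
    exact ⟨i, hi, by rw [← h1, ← h2]⟩

lemma vertKmer_injective {k : ℕ} (hk : 1 ≤ k) :
    Function.Injective (fun q : ℕ × ℕ => vertKmer k q.1 q.2) := by
  rintro ⟨c, r⟩ ⟨c', r'⟩ h
  simp only at h
  have h1 : ((c, r) : ℕ × ℕ) ∈ vertKmer k c r := mem_vertKmer.mpr ⟨rfl, 0, by omega, by omega⟩
  have h2 : ((c', r') : ℕ × ℕ) ∈ vertKmer k c' r' := mem_vertKmer.mpr ⟨rfl, 0, by omega, by omega⟩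
  rw [h] at h1
  rw [← h] at h2
  rw [mem_vertKmer] at h1 h2
  obtain ⟨hc1, i1, _, hr1⟩ := h1
  obtain ⟨hc2, i2, _, hr2⟩ := h2
  simp only at hc1 hc2 hr1 hr2
  ext <;> simp <;> omega

lemma vertKmer_disjoint_col {k c r c' r' : ℕ} (h : c ≠ c') :
    Disjoint (vertKmer k c r) (vertKmer k c' r') := by
  rw [Finset.disjoint_left]
  intro q hq hq'
  rw [mem_vertKmer] at hq hq'
  exact h (hq.1 ▸ hq'.1 ▸ rfl)

lemma vertKmer_disjoint_gap {k c r c' r' : ℕ} (h : r + k ≤ r') :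
    Disjoint (vertKmer k c r) (vertKmer k c' r') := by
  rw [Finset.disjoint_left]
  intro q hq hq'
  rw [mem_vertKmer] at hq hq'
  obtain ⟨_, i, hi, hqi⟩ := hq
  obtain ⟨_, i', hi', hqi'⟩ := hq'
  omega

lemma vertKmer_overlap {k c r r' : ℕ} (hk : 1 ≤ k) (h1 : r ≤ r') (h2 : r' < r + k) :
    ¬ Disjoint (vertKmer k c r) (vertKmer k c r') := by
  intro h
  have hm1 : ((c, r') : ℕ × ℕ) ∈ vertKmer k c r :=
    mem_vertKmer.mpr ⟨rfl, r' - r, by omega, by omega⟩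
  have hm2 : ((c, r') : ℕ × ℕ) ∈ vertKmer k c r' :=
    mem_vertKmer.mpr ⟨rfl, 0, by omega, by omega⟩
  exact Finset.disjoint_left.mp h hm1 hm2

lemma freeCount_eq (k n x s : ℕ) (hk : 2 ≤ k) (hnk : n < k) :
    freeCount k n x s = (configs k (Finset.Icc 1 n) (x+1-k) s).card := by
  have hk1 : 1 ≤ k := by omega
  have hinj := vertKmer_injective (k := k) hk1
  have hset : {C | IsFreeConfig k n x s C}
      = ↑((configs k (Finset.Icc 1 n) (x+1-k) s).image
          (fun A => A.image (fun q : ℕ × ℕ => vertKmer k q.1 q.2))) := by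
    ext C
    simp only [Set.mem_setOf_eq, Finset.coe_image, Set.mem_image, Finset.mem_coe]
    constructor
    · rintro ⟨hcard, hplace, hpair⟩
      have hvert : ∀ p ∈ C, ∃ c r, (1 ≤ c ∧ c ≤ n ∧ 1 ≤ r ∧ r + k ≤ x + 1)
          ∧ p = vertKmer k c r := by
        intro p hp
        rcases hplace p hp with ⟨c, r, hc1, hck, hr1, hrm, rfl⟩ | ⟨c, r, hc1, hcn, hr1, hrk, rfl⟩
        · omega
        · exact ⟨c, r, ⟨hc1, hcn, hr1, hrk⟩, rfl⟩
      have himg : ((Finset.Icc 1 n ×ˢ Finset.Icc 1 (x+1-k)).filter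
          (fun q => vertKmer k q.1 q.2 ∈ C)).image (fun q : ℕ × ℕ => vertKmer k q.1 q.2)
          = C := by
        apply Finset.Subset.antisymm
        · intro p hp
          simp only [Finset.mem_image, Finset.mem_filter] at hp
          obtain ⟨q, ⟨_, hq⟩, rfl⟩ := hp
          exact hq
        · intro p hp
          obtain ⟨c, r, ⟨hc1, hcn, hr1, hrk⟩, rfl⟩ := hvert p hp
          simp only [Finset.mem_image, Finset.mem_filter, Finset.mem_product, Finset.mem_Icc]
          exact ⟨(c, r), ⟨⟨⟨hc1, hcn⟩, ⟨hr1, by omega⟩⟩, hp⟩, rfl⟩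
      refine ⟨(Finset.Icc 1 n ×ˢ Finset.Icc 1 (x+1-k)).filter
        (fun q => vertKmer k q.1 q.2 ∈ C), ?_, himg⟩
      · -- membership in configs
        simp only [configs, Finset.mem_filter, Finset.mem_powersetCard]
        refine ⟨⟨Finset.filter_subset _ _, ?_⟩, ?_⟩
        · rw [← Finset.card_image_of_injective _ hinj, himg, hcard]
        · intro q1 hq1 q2 hq2 hne
          simp only [Finset.mem_filter] at hq1 hq2
          by_contra hcon
          push_neg at hcon
          obtain ⟨hfst, hg1, hg2⟩ := hcon
          have hpne : vertKmer k q1.1 q1.2 ≠ vertKmer k q2.1 q2.2 := by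
            intro h
            exact hne (hinj h)
          have hdisj := hpair hq1.2 hq2.2 hpne
          rw [hfst] at hdisj
          rcases le_total q1.2 q2.2 with hle | hle
          · exact vertKmer_overlap (c := q2.1) hk1 hle (by omega) hdisj
          · exact vertKmer_overlap (c := q2.1) hk1 hle (by omega) hdisj.symm
    · rintro ⟨A, hA, rfl⟩
      simp only [configs, Finset.mem_filter, Finset.mem_powersetCard] at hA
      obtain ⟨⟨hsub, hcard⟩, hgood⟩ := hA
      refine ⟨?_, ?_, ?_⟩
      · rw [Finset.card_image_of_injective _ hinj, hcard]
      · intro p hp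
        simp only [Finset.mem_image] at hp
        obtain ⟨q, hq, rfl⟩ := hp
        have := hsub hq
        rw [Finset.mem_product, Finset.mem_Icc, Finset.mem_Icc] at this
        exact Or.inr ⟨q.1, q.2, this.1.1, this.1.2, this.2.1, by omega, rfl⟩
      · intro p hp q hq hne
        simp only [Finset.mem_coe, Finset.mem_image] at hp hq
        obtain ⟨q1, hq1, rfl⟩ := hp
        obtain ⟨q2, hq2, rfl⟩ := hq
        have hne12 : q1 ≠ q2 := fun h => hne (by rw [h])
        rcases hgood q1 hq1 q2 hq2 hne12 with h | h | h
        · exact vertKmer_disjoint_col h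
        · exact vertKmer_disjoint_gap h
        · exact (vertKmer_disjoint_gap h).symm
  rw [freeCount, hset, Set.ncard_coe_finset]
  apply Finset.card_image_of_injective
  exact Finset.image_injective hinj

/-- Recurrence for `k`-mer coverings, free boundary, `n < k` (all `k`-mers vertical):
`∑_{i=0}^{s} (-1)^i C(s,i) a(m-i, s) = n^s` for `m ≥ k s`. -/
theorem free_recurrence_narrow (k n s : ℕ) (hk : 2 ≤ k) (hn1 : 1 ≤ n) (hnk : n < k)
    (hs : 1 ≤ s) (m : ℕ) (hm : k * s ≤ m) :
    ∑ i ∈ Finset.range (s + 1),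
        (-1 : ℤ) ^ i * (s.choose i : ℤ) * (freeCount k n (m - i) s : ℤ) =
      (n : ℤ) ^ s := by
  have hmul1 : (k-1)*(s-1) + (k + s) = k*s + 1 := by
    obtain ⟨a, rfl⟩ : ∃ a, k = a + 2 := ⟨k - 2, by omega⟩
    obtain ⟨b, rfl⟩ : ∃ b, s = b + 1 := ⟨s - 1, by omega⟩
    simp only [show a+2-1 = a+1 from rfl, show b+1-1 = b from rfl]
    ring
  set L₀ := m - s + 1 - k with hL0
  have hks : s ≤ m := by
    have : 1 * s ≤ k * s := Nat.mul_le_mul_right s (by omega)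
    omega
  have hL : (k-1)*(s-1) ≤ L₀ := by omega
  have key := configs_fwdDiff k hk (Finset.Icc 1 n) s L₀ hL
  have hcardIcc : (Finset.Icc 1 n).card = n := by simp
  have e1 := fwdDiff_iter_eq_sum_shift (1:ℕ)
    (fun t => ((configs k (Finset.Icc 1 n) (t + L₀) s).card : ℤ)) s 0
  rw [key] at e1
  simp only [smul_eq_mul, mul_one, zero_add] at e1
  rw [← Finset.sum_range_reflect]
  have hterm : ∀ j ∈ Finset.range (s+1),
      (-1 : ℤ)^(s+1-1-j) * (s.choose (s+1-1-j) : ℤ) * (freeCount k n (m - (s+1-1-j)) s : ℤ)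
      = ((-1:ℤ)^(s-j) * (s.choose j : ℤ)) * ((configs k (Finset.Icc 1 n) (j + L₀) s).card : ℤ) := by
    intro j hj
    rw [Finset.mem_range] at hj
    have h1 : s + 1 - 1 - j = s - j := by omega
    rw [h1]
    have h2 : m - (s - j) = m - s + j := by omega
    rw [h2, Nat.choose_symm (by omega), freeCount_eq k n (m - s + j) s hk hnk]
    have h3 : m - s + j + 1 - k = j + L₀ := by omega
    rw [h3]
  rw [Finset.sum_congr rfl hterm, ← e1, hcardIcc]
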